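/- In a deterministic Ex-BMDP, let π be an endogenous policy and fix an observation x with positive probability at time 0. Then for every t ≥ 1 and all (s', e') ∈ S × E, the joint conditional law of the latent state t steps later factorizes: P_π(s_t = s', e_t = e' | x_0 = x) = P_π(s_t = s' | s_0 = f*(x)) · P(e_t = e' | e_0 = f*_e(x)), where the endogenous marginal is the Markov chain on S with kernel P_S(s'|s) = Σ_{a∈A} π̄(a|s)·1[T(s,a) = s'] and the exogenous marginal is the Markov chain on E with kernel T_e. -/

import Mathlib

/-!
STATEMENT 0: In a deterministic Ex-BMDP, for an endogenous policy π and an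
observation x with positive probability at time 0, the conditional joint law of
the latent state t steps later factorizes into the product of the endogenous
Markov chain (kernel `P_S(s'|s) = Σ_a π̄(a|s)·1[T(s,a)=s']`, started at f*(x))
and the exogenous Markov chain (kernel T_e, started at f*_e(x)).
-/

open Finset

/-- `n`-step transition probabilities (matrix power) of a kernel `K`. -/
noncomputable def matPow {W : Type*} [Fintype W] [DecidableEq W]
    (K : W → W → ℝ) : ℕ → W → W → ℝ
  | 0, w, w' => if w = w' then 1 else 0
  | n + 1, w, w' => ∑ u : W, K w u * matPow K n u w'

/-- Evolve a (sub)distribution `ν` for `n` steps under the kernel `K`. -/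
noncomputable def evolveDist {W : Type*} [Fintype W]
    (K : W → W → ℝ) (ν : W → ℝ) : ℕ → W → ℝ
  | 0, w => ν w
  | n + 1, w' => ∑ w : W, evolveDist K ν n w * K w w'

/-- The Markov kernel on the endogenous states induced by a state policy `π̄`:
`P_S(s'|s) = Σ_a π̄(a|s)·1[T(s,a)=s']`. -/
noncomputable def endoKer {S A : Type*} [Fintype A] [DecidableEq S]
    (T : S → A → S) (πbar : S → A → ℝ) : S → S → ℝ :=
  fun s s' => ∑ a : A, πbar s a * (if T s a = s' then 1 else 0)

/-- The Markov kernel of the joint latent process `(s_t, e_t)` under policy `π`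
(observations and actions marginalized out). -/
noncomputable def jointKer {S E X A : Type*} [Fintype X] [Fintype A] [DecidableEq S]
    (T : S → A → S) (Te : E → E → ℝ) (q : S → E → X → ℝ) (π : X → A → ℝ) :
    S × E → S × E → ℝ :=
  fun w w' =>
    ∑ x : X, q w.1 w.2 x *
      ((∑ a : A, π x a * (if T w.1 a = w'.1 then 1 else 0)) * Te w.2 w'.2)

lemma matPow_succ_right {W : Type*} [Fintype W] [DecidableEq W]
    (K : W → W → ℝ) (n : ℕ) (w w' : W) :
    matPow K (n+1) w w' = ∑ u : W, matPow K n w u * K u w' := by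
  induction n generalizing w w' with
  | zero => simp [matPow]
  | succ n ih =>
    have h1 : matPow K (n+1+1) w w' = ∑ u : W, K w u * matPow K (n+1) u w' := rfl
    rw [h1]
    simp_rw [ih, Finset.mul_sum]
    rw [Finset.sum_comm]
    refine Finset.sum_congr rfl fun v _ => ?_
    rw [← ih w v]
    have h2 : matPow K (n+1) w v = ∑ u : W, K w u * matPow K n u v := rfl
    rw [h2, Finset.sum_mul]
    exact Finset.sum_congr rfl fun u _ => by ring

lemma evolveDist_smul {W : Type*} [Fintype W]
    (K : W → W → ℝ) (ν : W → ℝ) (c : ℝ) (n : ℕ) (w : W) :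
    evolveDist K (fun u => c * ν u) n w = c * evolveDist K ν n w := by
  induction n generalizing w with
  | zero => rfl
  | succ n ih =>
    show (∑ u : W, evolveDist K (fun u => c * ν u) n u * K u w) = _
    simp_rw [ih]
    rw [show c * evolveDist K ν (n+1) w = c * ∑ u : W, evolveDist K ν n u * K u w from rfl,
      Finset.mul_sum]
    exact Finset.sum_congr rfl fun u _ => by ring

lemma evolveDist_prod {S E : Type*} [Fintype S] [Fintype E]
    (K1 : S → S → ℝ) (K2 : E → E → ℝ) (g : S → ℝ) (h : E → ℝ) (n : ℕ) (s : S) (e : E) :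
    evolveDist (fun w w' : S × E => K1 w.1 w'.1 * K2 w.2 w'.2)
        (fun w => g w.1 * h w.2) n (s, e)
      = evolveDist K1 g n s * evolveDist K2 h n e := by
  induction n generalizing s e with
  | zero => rfl
  | succ n ih =>
    show (∑ w : S × E, evolveDist _ _ n w * (K1 w.1 s * K2 w.2 e)) = _
    rw [Fintype.sum_prod_type]
    have : ∀ s1 e1, evolveDist (fun w w' : S × E => K1 w.1 w'.1 * K2 w.2 w'.2)
        (fun w => g w.1 * h w.2) n (s1, e1)
        = evolveDist K1 g n s1 * evolveDist K2 h n e1 := fun s1 e1 => ih s1 e1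
    simp only [this]
    rw [show evolveDist K1 g (n+1) s = ∑ u : S, evolveDist K1 g n u * K1 u s from rfl,
      show evolveDist K2 h (n+1) e = ∑ u : E, evolveDist K2 h n u * K2 u e from rfl,
      Finset.sum_mul_sum]
    exact Finset.sum_congr rfl fun s1 _ => Finset.sum_congr rfl fun e1 _ => by ring

lemma evolveDist_ker {S : Type*} [Fintype S] [DecidableEq S]
    (K : S → S → ℝ) (s0 : S) (n : ℕ) (s' : S) :
    evolveDist K (fun s1 => K s0 s1) n s' = matPow K (n+1) s0 s' := by
  induction n generalizing s' with
  | zero =>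
    show K s0 s' = matPow K 1 s0 s'
    simp [matPow]
  | succ n ih =>
    show (∑ u : S, evolveDist K (fun s1 => K s0 s1) n u * K u s') = _
    simp_rw [ih]
    rw [matPow_succ_right]

theorem ac_state_latent_factorization_given_x0
    {S E X A : Type*}
    [Fintype S] [Fintype E] [Fintype X] [Fintype A]
    [DecidableEq S] [DecidableEq E] [DecidableEq X] [DecidableEq A]
    [Nonempty S] [Nonempty E] [Nonempty X] [Nonempty A]
    -- deterministic Ex-BMDP data
    (T : S → A → S) (Te : E → E → ℝ) (q : S → E → X → ℝ)
    (fstar : X → S) (fstarE : X → E)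
    (hTe_nonneg : ∀ e e', 0 ≤ Te e e') (hTe_sum : ∀ e, ∑ e' : E, Te e e' = 1)
    (hq_nonneg : ∀ s e x, 0 ≤ q s e x) (hq_sum : ∀ s e, ∑ x : X, q s e x = 1)
    -- block assumption: the decoders recover the latent state on the support
    (hblock : ∀ s e x, 0 < q s e x → fstar x = s ∧ fstarE x = e)
    -- endogenous policy π and its induced state policy π̄
    (π : X → A → ℝ) (πbar : S → A → ℝ)
    (hπ_nonneg : ∀ x a, 0 ≤ π x a) (hπ_sum : ∀ x, ∑ a : A, π x a = 1)
    (hendo : ∀ x1 x2, fstar x1 = fstar x2 → π x1 = π x2)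
    (hπbar : ∀ s e x, 0 < q s e x → ∀ a, πbar s a = π x a)
    -- initial latent distribution
    (μ0 : S × E → ℝ)
    (hμ0_nonneg : ∀ w, 0 ≤ μ0 w) (hμ0_sum : ∑ w : S × E, μ0 w = 1)
    -- a fixed observation with positive probability at time 0
    (x : X) (hx : 0 < ∑ w : S × E, μ0 w * q w.1 w.2 x)
    (t : ℕ) (ht : 1 ≤ t) (s' : S) (e' : E) :
    -- P_π(s_t = s', e_t = e' | x_0 = x):  the joint law of (x_0 = x, s_1, e_1)
    -- is evolved (t-1) steps under the joint latent kernel and normalized by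
    -- P(x_0 = x); it factorizes into the two marginal chains.
    evolveDist (jointKer T Te q π)
        (fun w1 => ∑ w : S × E, μ0 w * q w.1 w.2 x *
          ((∑ a : A, π x a * (if T w.1 a = w1.1 then 1 else 0)) * Te w.2 w1.2))
        (t - 1) (s', e')
      / (∑ w : S × E, μ0 w * q w.1 w.2 x)
    = matPow (endoKer T πbar) t (fstar x) s' * matPow Te t (fstarE x) e' := by
  set s0 := fstar x with hs0
  set e0 := fstarE x with he0
  -- The normalization sum collapses to the single term at (s0, e0).
  have hcollapse : (∑ w : S × E, μ0 w * q w.1 w.2 x) = μ0 (s0, e0) * q s0 e0 x := by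
    refine Finset.sum_eq_single (s0, e0) (fun w _ hw => ?_) (fun h => absurd (Finset.mem_univ _) h)
    rcases (hq_nonneg w.1 w.2 x).lt_or_eq with hpos | h0
    · obtain ⟨h1, h2⟩ := hblock w.1 w.2 x hpos
      exact absurd (Prod.ext h1.symm h2.symm : w = (s0, e0)) hw
    · rw [← h0, mul_zero]
  have hC : 0 < μ0 (s0, e0) * q s0 e0 x := hcollapse ▸ hx
  have hq0 : 0 < q s0 e0 x := by
    rcases (hq_nonneg s0 e0 x).lt_or_eq with h | h
    · exact h
    · rw [← h, mul_zero] at hC; exact absurd hC (lt_irrefl 0)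
  have hπb : ∀ a, πbar s0 a = π x a := hπbar s0 e0 x hq0
  set C := μ0 (s0, e0) * q s0 e0 x with hCdef
  -- The joint kernel factorizes.
  have hker : jointKer T Te q π
      = fun w w' : S × E => endoKer T πbar w.1 w'.1 * Te w.2 w'.2 := by
    funext w w'
    show (∑ y : X, q w.1 w.2 y *
        ((∑ a : A, π y a * (if T w.1 a = w'.1 then 1 else 0)) * Te w.2 w'.2)) = _
    have hterm : ∀ y : X, q w.1 w.2 y *
        ((∑ a : A, π y a * (if T w.1 a = w'.1 then 1 else 0)) * Te w.2 w'.2)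
        = q w.1 w.2 y * (endoKer T πbar w.1 w'.1 * Te w.2 w'.2) := by
      intro y
      rcases (hq_nonneg w.1 w.2 y).lt_or_eq with hpos | h0
      · congr 2
        unfold endoKer
        exact Finset.sum_congr rfl fun a _ => by rw [hπbar w.1 w.2 y hpos a]
      · rw [← h0, zero_mul, zero_mul]
    rw [Finset.sum_congr rfl fun y _ => hterm y, ← Finset.sum_mul, hq_sum, one_mul]
  -- The initial (time-1) subdistribution collapses and factorizes.
  have hν : (fun w1 : S × E => ∑ w : S × E, μ0 w * q w.1 w.2 x *
        ((∑ a : A, π x a * (if T w.1 a = w1.1 then 1 else 0)) * Te w.2 w1.2))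
      = fun w1 : S × E => (C * endoKer T πbar s0 w1.1) * Te e0 w1.2 := by
    funext w1
    have : (∑ w : S × E, μ0 w * q w.1 w.2 x *
        ((∑ a : A, π x a * (if T w.1 a = w1.1 then 1 else 0)) * Te w.2 w1.2))
        = C * ((∑ a : A, π x a * (if T s0 a = w1.1 then 1 else 0)) * Te e0 w1.2) := by
      refine Finset.sum_eq_single (s0, e0) (fun w _ hw => ?_)
        (fun h => absurd (Finset.mem_univ _) h)
      rcases (hq_nonneg w.1 w.2 x).lt_or_eq with hpos | h0
      · obtain ⟨h1, h2⟩ := hblock w.1 w.2 x hpos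
        exact absurd (Prod.ext h1.symm h2.symm : w = (s0, e0)) hw
      · rw [← h0, mul_zero, zero_mul]
    rw [this]
    have hendo : (∑ a : A, π x a * (if T s0 a = w1.1 then 1 else 0))
        = endoKer T πbar s0 w1.1 := by
      unfold endoKer
      exact Finset.sum_congr rfl fun a _ => by rw [hπb a]
    rw [hendo]; ring
  rw [hcollapse, hν, hker]
  have hfact := evolveDist_prod (endoKer T πbar) Te
    (fun s1 => C * endoKer T πbar s0 s1) (fun e1 => Te e0 e1) (t-1) s' e'
  rw [hfact, evolveDist_smul (endoKer T πbar) (fun s1 => endoKer T πbar s0 s1) C (t-1) s',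
    evolveDist_ker, evolveDist_ker]
  have ht1 : t - 1 + 1 = t := Nat.succ_pred_eq_of_pos ht
  rw [ht1]
  field_simp
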